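/- Let k ≥ 4 and let X_k be the graph consisting of k+1 internally disjoint paths P_1, ..., P_{k+1}, each of length k, sharing a common endpoint a, with other endpoints b_1, ..., b_{k+1}, plus the edges b_i b_{i+1} for i = 1, ..., k. Let G be obtained by taking two disjoint copies of X_k and identifying their apex vertices a. Then for every vertex r of G, there exists an isometric path Q of G with k vertices all at the same distance from r; consequently the isometric path antichain cover number of G is at least k. -/

import Mathlib

open SimpleGraph

variable {V : Type*}

/-- One step of the BFS DAG `G_r`: the edge `ab` is oriented from `a` to `b`
(toward the root `r`), i.e. `d(r,b) = d(r,a) - 1`. -/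
def dagStep (G : SimpleGraph V) (r a b : V) : Prop :=
  G.Adj a b ∧ G.dist r a = G.dist r b + 1

/-- Reachability by a directed path in the BFS DAG `G_r`. -/
def dagReach (G : SimpleGraph V) (r a b : V) : Prop :=
  Relation.ReflTransGen (dagStep G r) a b

/-- A finite set of vertices is an antichain with respect to the root `r`:
its vertices are pairwise unreachable in the BFS DAG `G_r`. -/
def IsAntichainSet (G : SimpleGraph V) (r : V) (A : Finset V) : Prop :=
  ∀ a ∈ A, ∀ b ∈ A, a ≠ b → ¬ dagReach G r a b ∧ ¬ dagReach G r b a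

/-- A walk is an isometric path: a shortest path between its endpoints. -/
def IsIsometricPath (G : SimpleGraph V) {u v : V} (p : G.Walk u v) : Prop :=
  p.IsPath ∧ p.length = G.dist u v

/-- The vertices of `p` can be covered by at most `k` many `r`-rooted isometric paths. -/
def CoveredBy (G : SimpleGraph V) (r : V) {x y : V} (p : G.Walk x y) (k : ℕ) : Prop :=
  ∃ s : Finset (Σ v : V, G.Walk r v), s.card ≤ k ∧
    (∀ q ∈ s, IsIsometricPath G q.2) ∧
    ∀ a ∈ p.support, ∃ q ∈ s, a ∈ q.2.support
/-- The graph obtained by taking two disjoint copies (indexed by `Bool`) of the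
graph `X_k` (which consists of `k+1` internally disjoint paths of length `k`
from a common apex `a` to endpoints `b_1, …, b_{k+1}`, together with the edges
`b_i b_{i+1}`), and identifying the two apex vertices.  The vertex `none` is the
common apex; `some (s, i, j)` is the vertex of copy `s`, path `i`, at distance
`j + 1` from the apex (so `b_i` is `some (s, i, k-1)`). -/
def gluedX (k : ℕ) : SimpleGraph (Option (Bool × Fin (k + 1) × Fin k)) :=
  SimpleGraph.fromRel (fun x y =>
    match x, y with
    | none, some (_, _, j) => (j : ℕ) = 0
    | some (s, i, j), some (s', i', j') =>
        s = s' ∧ ((i = i' ∧ (j : ℕ) + 1 = (j' : ℕ)) ∨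
          ((j : ℕ) = k - 1 ∧ (j' : ℕ) = k - 1 ∧ (i : ℕ) + 1 = (i' : ℕ)))
    | _, _ => False)


open SimpleGraph

-- adjacency constructors
lemma glued_adj_apex {k : ℕ} (s : Bool) (i : Fin (k+1)) (j : Fin k) (hj : (j : ℕ) = 0) :
    (gluedX k).Adj none (some (s, i, j)) := by
  rw [gluedX, SimpleGraph.fromRel_adj]
  exact ⟨by simp, Or.inl hj⟩

lemma glued_adj_step {k : ℕ} (s : Bool) (i : Fin (k+1)) {j j' : Fin k}
    (h : (j : ℕ) + 1 = (j' : ℕ)) :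
    (gluedX k).Adj (some (s, i, j)) (some (s, i, j')) := by
  rw [gluedX, SimpleGraph.fromRel_adj]
  refine ⟨?_, Or.inl ⟨rfl, Or.inl ⟨rfl, h⟩⟩⟩
  simp only [ne_eq, Option.some.injEq, Prod.mk.injEq, true_and]
  rintro ⟨-, hj⟩
  omega
  
lemma glued_adj_rim {k : ℕ} (s : Bool) {i i' : Fin (k+1)} {j j' : Fin k}
    (hj : (j : ℕ) = k - 1) (hj' : (j' : ℕ) = k - 1) (hi : (i : ℕ) + 1 = (i' : ℕ)) :
    (gluedX k).Adj (some (s, i, j)) (some (s, i', j')) := by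
  rw [gluedX, SimpleGraph.fromRel_adj]
  refine ⟨?_, Or.inl ⟨rfl, Or.inr ⟨hj, hj', hi⟩⟩⟩
  simp only [ne_eq, Option.some.injEq, Prod.mk.injEq, true_and]
  rintro ⟨hi', -⟩
  rw [hi'] at hi; omega

-- Lipschitz elimination
lemma glued_lip {k : ℕ} (ψ : Option (Bool × Fin (k+1) × Fin k) → ℤ)
    (h1 : ∀ s i (j : Fin k), (j : ℕ) = 0 → |ψ none - ψ (some (s, i, j))| ≤ 1)
    (h2 : ∀ s i (j j' : Fin k), (j : ℕ) + 1 = (j' : ℕ) →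
      |ψ (some (s, i, j)) - ψ (some (s, i, j'))| ≤ 1)
    (h3 : ∀ s (i i' : Fin (k+1)) (j j' : Fin k), (j : ℕ) = k - 1 → (j' : ℕ) = k - 1 →
      (i : ℕ) + 1 = (i' : ℕ) → |ψ (some (s, i, j)) - ψ (some (s, i', j'))| ≤ 1) :
    ∀ x y, (gluedX k).Adj x y → |ψ x - ψ y| ≤ 1 := by
  intro x y h
  rw [gluedX, SimpleGraph.fromRel_adj] at h
  rcases x with _ | ⟨s, i, j⟩ <;> rcases y with _ | ⟨s', i', j'⟩
  · simp at h
  · obtain ⟨-, h | h⟩ := h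
    · exact h1 _ _ _ h
    · exact h.elim
  · obtain ⟨-, h | h⟩ := h
    · exact h.elim
    · rw [abs_sub_comm]; exact h1 _ _ _ h
  · obtain ⟨-, h | h⟩ := h
    · obtain ⟨rfl, ⟨rfl, hj⟩ | ⟨ha, hb, hc⟩⟩ := h
      · exact h2 _ _ _ _ hj
      · exact h3 _ _ _ _ _ ha hb hc
    · obtain ⟨rfl, ⟨rfl, hj⟩ | ⟨ha, hb, hc⟩⟩ := h <;> rw [abs_sub_comm]
      · exact h2 _ _ _ _ hj
      · exact h3 _ _ _ _ _ ha hb hc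

lemma abs_le_walk_length {V : Type*} {G : SimpleGraph V} (ψ : V → ℤ)
    (hlip : ∀ x y, G.Adj x y → |ψ x - ψ y| ≤ 1) :
    ∀ {u v : V} (p : G.Walk u v), |ψ u - ψ v| ≤ (p.length : ℤ) := by
  intro u v p
  induction p with
  | nil => simp
  | @cons u w v h p ih =>
      have h1 := hlip _ _ h
      have h2 := abs_sub_le (ψ u) (ψ w) (ψ v)
      simp only [SimpleGraph.Walk.length_cons]
      push_cast
      linarith

lemma abs_le_dist {V : Type*} {G : SimpleGraph V} (ψ : V → ℤ)
    (hlip : ∀ x y, G.Adj x y → |ψ x - ψ y| ≤ 1) {u v : V} (h : G.Reachable u v) :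
    |ψ u - ψ v| ≤ (G.dist u v : ℤ) := by
  obtain ⟨p, hp⟩ := h.exists_walk_length_eq_dist
  simpa [hp] using abs_le_walk_length ψ hlip p

/-- Radial walk from the apex down path `i` of copy `s` to depth `j`. -/
def radial (k : ℕ) (s : Bool) (i : Fin (k+1)) : (j : ℕ) → (h : j < k) →
    (gluedX k).Walk none (some (s, i, ⟨j, h⟩))
  | 0, h => SimpleGraph.Walk.cons (glued_adj_apex s i ⟨0, h⟩ rfl) SimpleGraph.Walk.nil
  | j+1, h => (radial k s i j (by omega)).concat (glued_adj_step s i (by simp))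

lemma radial_length (k : ℕ) (s : Bool) (i : Fin (k+1)) (j : ℕ) (h : j < k) :
    (radial k s i j h).length = j + 1 := by
  induction j with
  | zero => simp [radial]
  | succ n ih => simp [radial, SimpleGraph.Walk.length_concat, ih]

/-- Rim walk in copy `s` from `b_0` to `b_n`. -/
def rimWalk (k : ℕ) (h0 : 0 < k) (s : Bool) : (n : ℕ) → (h : n < k + 1) →
    (gluedX k).Walk (some (s, ⟨0, by omega⟩, ⟨k-1, by omega⟩)) (some (s, ⟨n, h⟩, ⟨k-1, by omega⟩))
  | 0, h => SimpleGraph.Walk.nil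
  | n+1, h => (rimWalk k h0 s n (by omega)).concat (glued_adj_rim s rfl rfl (by simp))

lemma rimWalk_length (k : ℕ) (h0 : 0 < k) (s : Bool) (n : ℕ) (h : n < k + 1) :
    (rimWalk k h0 s n h).length = n := by
  induction n with
  | zero => simp [rimWalk]
  | succ m ih => rw [rimWalk, SimpleGraph.Walk.length_concat, ih (by omega)]

lemma rimWalk_support (k : ℕ) (h0 : 0 < k) (s : Bool) (n : ℕ) (h : n < k + 1) :
    (rimWalk k h0 s n h).support =
      (List.range (n+1)).map
        (fun m => some (s, ⟨min m k, by omega⟩, ⟨k-1, by omega⟩)) := by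
  induction n with
  | zero =>
      have h' : (⟨min 0 k, by omega⟩ : Fin (k+1)) = ⟨0, by omega⟩ := Fin.ext (by simp)
      simp [rimWalk, List.range_succ, h']
  | succ m ih =>
      rw [rimWalk, SimpleGraph.Walk.support_concat, ih (by omega),
        List.range_succ (n := m+1), List.map_append]
      congr 1
      have h' : (⟨min (m+1) k, by omega⟩ : Fin (k+1)) = ⟨m+1, h⟩ :=
        Fin.ext (by simp; omega)
      simp [h']

/-- Potential witnessing that the rim path is isometric. -/
def psi (k : ℕ) (star : Bool) : Option (Bool × Fin (k+1) × Fin k) → ℤ :=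
  fun v => v.elim 0 (fun q => if q.1 = star then min (q.2.1.val : ℤ) ((q.2.2.val : ℤ) + 1) else 0)

/-- Potential witnessing that all vertices of copy `star` are far from `r`. -/
def chi (k : ℕ) (star : Bool) : Option (Bool × Fin (k+1) × Fin k) → ℤ :=
  fun v => v.elim 0 (fun q => if q.1 = star then (q.2.2.val : ℤ) + 1 else -((q.2.2.val : ℤ) + 1))

lemma psi_lip (k : ℕ) (star : Bool) :
    ∀ x y, (gluedX k).Adj x y → |psi k star x - psi k star y| ≤ 1 := by
  apply glued_lip
  · intro s i j hj
    simp only [psi, Option.elim_none, Option.elim_some]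
    split_ifs <;> rw [abs_le] <;> constructor <;> omega
  · intro s i j j' hj
    simp only [psi, Option.elim_some]
    split_ifs <;> rw [abs_le] <;> constructor <;> omega
  · intro s i i' j j' hj hj' hi
    simp only [psi, Option.elim_some]
    split_ifs <;> rw [abs_le] <;> constructor <;> omega

lemma chi_lip (k : ℕ) (star : Bool) :
    ∀ x y, (gluedX k).Adj x y → |chi k star x - chi k star y| ≤ 1 := by
  apply glued_lip
  · intro s i j hj
    simp only [chi, Option.elim_none, Option.elim_some]
    split_ifs <;> rw [abs_le] <;> constructor <;> omega
  · intro s i j j' hj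
    simp only [chi, Option.elim_some]
    split_ifs <;> rw [abs_le] <;> constructor <;> omega
  · intro s i i' j j' hj hj' hi
    simp only [chi, Option.elim_some]
    split_ifs <;> rw [abs_le] <;> constructor <;> omega

lemma dagReach_dist_le {V : Type*} {G : SimpleGraph V} {r a b : V}
    (h : dagReach G r a b) : G.dist r b ≤ G.dist r a := by
  induction h with
  | refl => exact le_refl _
  | tail _ hstep ih => have := hstep.2; omega

lemma dagReach_dist_lt {V : Type*} {G : SimpleGraph V} {r a b : V}
    (h : dagReach G r a b) (hne : a ≠ b) : G.dist r b < G.dist r a := by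
  rcases Relation.ReflTransGen.cases_head h with rfl | ⟨c, hstep, hreach⟩
  · exact absurd rfl hne
  · have h1 := dagReach_dist_le hreach
    have h2 := hstep.2
    omega

private theorem statement11_aux (k : ℕ) (hk : 4 ≤ k) (r : Option (Bool × Fin (k + 1) × Fin k)) :
    ∃ (x y : Option (Bool × Fin (k + 1) × Fin k)) (p : (gluedX k).Walk x y),
      IsIsometricPath (gluedX k) p ∧ p.support.length = k ∧
      (∀ a ∈ p.support, (gluedX k).dist r a = (gluedX k).dist r x) ∧
      ∃ A : Finset (Option (Bool × Fin (k + 1) × Fin k)),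
        (∀ a ∈ A, a ∈ p.support) ∧ IsAntichainSet (gluedX k) r A ∧ k ≤ A.card := by
  have hk0 : 0 < k := by omega
  obtain ⟨star, d0, W1, hW1, hχ⟩ :
      ∃ (star : Bool) (d0 : ℕ) (W1 : (gluedX k).Walk r none),
        W1.length = d0 ∧ chi k star r = -(d0 : ℤ) := by
    rcases r with _ | ⟨s0, i0, j0⟩
    · exact ⟨false, 0, SimpleGraph.Walk.nil, rfl, by simp [chi]⟩
    · refine ⟨!s0, (j0 : ℕ) + 1, (radial k s0 i0 j0 j0.isLt).reverse, ?_, ?_⟩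
      · rw [SimpleGraph.Walk.length_reverse, radial_length]
      · simp [chi]
  have key : ∀ (i : Fin (k+1)) (hj : k - 1 < k),
      (gluedX k).dist r (some (star, i, ⟨k-1, hj⟩)) = d0 + k := by
    intro i hj
    have hub := SimpleGraph.dist_le (W1.append (radial k star i (k-1) hj))
    rw [SimpleGraph.Walk.length_append, hW1, radial_length] at hub
    have hlb := abs_le_dist (chi k star) (chi_lip k star)
      (W1.append (radial k star i (k-1) hj)).reachable
    have hv : chi k star (some (star, i, ⟨k-1, hj⟩)) = ((k - 1 : ℕ) : ℤ) + 1 := by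
      simp [chi]
    rw [hχ, hv, abs_le] at hlb
    omega
  have hlt : k - 1 < k + 1 := by omega
  refine ⟨_, _, rimWalk k hk0 star (k-1) hlt, ?_⟩
  set p := rimWalk k hk0 star (k-1) hlt with hp
  have hsup : p.support = (List.range k).map
      (fun m => (some (star, ⟨min m k, by omega⟩, ⟨k-1, by omega⟩) :
        Option (Bool × Fin (k+1) × Fin k))) := by
    have h := rimWalk_support k hk0 star (k-1) hlt
    rwa [show k - 1 + 1 = k by omega] at h
  have hnodup : p.support.Nodup := by
    rw [hsup]
    refine List.Nodup.map_on ?_ List.nodup_range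
    intro m hm m' hm' hEq
    simp only [List.mem_range] at hm hm'
    simp only [Option.some.injEq, Prod.mk.injEq, Fin.mk.injEq, true_and] at hEq
    omega
  have hlen : p.length = k - 1 := rimWalk_length k hk0 star (k-1) hlt
  have hslen : p.support.length = k := by
    rw [hsup, List.length_map, List.length_range]
  have hsame : ∀ a ∈ p.support, (gluedX k).dist r a = d0 + k := by
    intro a ha
    rw [hsup] at ha
    simp only [List.mem_map, List.mem_range] at ha
    obtain ⟨m, hm, rfl⟩ := ha
    exact key _ _
  have hdist : (gluedX k).dist (some (star, ⟨0, by omega⟩, ⟨k-1, by omega⟩))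
      (some (star, ⟨k-1, hlt⟩, ⟨k-1, by omega⟩)) = k - 1 := by
    have hub := SimpleGraph.dist_le p
    rw [hlen] at hub
    have hlb := abs_le_dist (psi k star) (psi_lip k star) p.reachable
    have h1 : psi k star (some (star, ⟨0, by omega⟩, ⟨k-1, by omega⟩)) = 0 := by
      simp [psi]
      omega
    have h2 : psi k star (some (star, ⟨k-1, hlt⟩, ⟨k-1, by omega⟩)) = ((k - 1 : ℕ) : ℤ) := by
      simp [psi]
    rw [h1, h2, abs_le] at hlb
    omega
  refine ⟨⟨(SimpleGraph.Walk.isPath_def p).mpr hnodup, by rw [hlen, hdist]⟩, hslen, ?_, ?_⟩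
  · intro a ha
    rw [hsame a ha, hsame _ p.start_mem_support]
  · refine ⟨p.support.toFinset, fun a ha => List.mem_toFinset.mp ha, ?_, ?_⟩
    · intro a ha b hb hne
      have h1 := hsame a (List.mem_toFinset.mp ha)
      have h2 := hsame b (List.mem_toFinset.mp hb)
      exact ⟨fun hr => by have := dagReach_dist_lt hr hne; omega,
        fun hr => by have := dagReach_dist_lt hr hne.symm; omega⟩
    · rw [List.toFinset_card_of_nodup hnodup, hslen]

/-- For `k ≥ 4` and every vertex `r` of the glued graph, there is
an isometric path with `k` vertices, all at the same distance from `r`;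
consequently its vertices form an antichain w.r.t. `r` of size at least `k`, so
the isometric path antichain cover number of the graph is at least `k`. -/
theorem statement11 (k : ℕ) (hk : 4 ≤ k) (r : Option (Bool × Fin (k + 1) × Fin k)) :
    ∃ (x y : Option (Bool × Fin (k + 1) × Fin k)) (p : (gluedX k).Walk x y),
      IsIsometricPath (gluedX k) p ∧ p.support.length = k ∧
      (∀ a ∈ p.support, (gluedX k).dist r a = (gluedX k).dist r x) ∧
      ∃ A : Finset (Option (Bool × Fin (k + 1) × Fin k)),
        (∀ a ∈ A, a ∈ p.support) ∧ IsAntichainSet (gluedX k) r A ∧ k ≤ A.card :=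
  statement11_aux k hk r
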